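/- Suppose n ≥ 3 and 0 ≤ m_1 ≤ m_2 ≤ ⋯ ≤ m_n. Let r be the largest integer with |m| − 2r ≥ 0 and r^1 the largest integer with |m^1| − 2r^1 ≥ 0, where m^1 = (m_2,…,m_n) and |m^1| = m_2 + ⋯ + m_n. For every integer j with r^1 < j ≤ r, one has w(m,j) = w(m^1, j−m_1) + w(m^1, j−m_1+1) + ⋯ + w(m^1, |m^1| − j). -/

import Mathlib

open Finsupp

/-- Multiindices `J : Fin n → ℕ` of total degree `j`. -/
abbrev MIdx (n j : ℕ) : Type := {J : Fin n → ℕ // ∑ i, J i = j}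

/-- The complex vector space `V_j` with basis `{e_J : |J| = j}`. -/
abbrev V (n j : ℕ) : Type := MIdx n j →₀ ℂ

/-- `J + 1ᵢ` : the multiindex `J` with its `i`-th entry increased by 1. -/
def incr {n : ℕ} (J : Fin n → ℕ) (i : Fin n) : Fin n → ℕ :=
  Function.update J i (J i + 1)

lemma sum_incr {n : ℕ} (J : Fin n → ℕ) (i : Fin n) :
    ∑ x, incr J i x = (∑ x, J x) + 1 := by
  unfold incr
  rw [Finset.sum_update_of_mem (Finset.mem_univ i),
    Finset.sum_eq_sum_sdiff_singleton_add (Finset.mem_univ i) J]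
  ring

/-- The map `f_{j+1,m} : V_j → V_{j+1}`, `e_J ↦ ∑ᵢ (jᵢ+1)(mᵢ−jᵢ) e_{J+1ᵢ}`. -/
noncomputable def fMap (n : ℕ) (m : Fin n → ℕ) (j : ℕ) : V n j →ₗ[ℂ] V n (j + 1) :=
  Finsupp.lift (V n (j + 1)) ℂ (MIdx n j) fun J =>
    ∑ i, (((J.1 i : ℂ) + 1) * ((m i : ℂ) - (J.1 i : ℂ))) •
      Finsupp.single (⟨incr J.1 i, by rw [sum_incr, J.2]⟩ : MIdx n (j + 1)) (1 : ℂ)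

/-- `d(m,j)`: the number of multiindices `J` with `J i ≤ m i` for all `i` and `|J| = j`. -/
noncomputable def dCount (n : ℕ) (m : Fin n → ℕ) (j : ℤ) : ℕ :=
  Set.ncard {J : Fin n → ℕ | (∀ i, J i ≤ m i) ∧ ∑ i, (J i : ℤ) = j}

/-- `w(m,j) = d(m,j) − d(m,j−1)`. -/
noncomputable def w (n : ℕ) (m : Fin n → ℕ) (j : ℤ) : ℤ :=
  (dCount n m j : ℤ) - (dCount n m (j - 1) : ℤ)

/-- Finset version of the counting set. -/
noncomputable def dFinset (n : ℕ) (m : Fin n → ℕ) (j : ℤ) : Finset (Fin n → ℕ) := by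
  classical
  exact (Fintype.piFinset fun i => Finset.range (m i + 1)).filter
    fun J => ∑ i, (J i : ℤ) = j

lemma mem_dFinset {n : ℕ} {m : Fin n → ℕ} {j : ℤ} {J : Fin n → ℕ} :
    J ∈ dFinset n m j ↔ (∀ i, J i ≤ m i) ∧ ∑ i, (J i : ℤ) = j := by
  classical
  simp [dFinset, Fintype.mem_piFinset, Nat.lt_succ_iff]

lemma dCount_eq_card (n : ℕ) (m : Fin n → ℕ) (j : ℤ) :
    dCount n m j = (dFinset n m j).card := by
  rw [dCount, ← Set.ncard_coe_finset]
  congr 1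
  ext J
  simp [mem_dFinset]

/-- Symmetry: `d(m, i) = d(m, |m| - i)`. -/
lemma dCount_symm (n : ℕ) (m : Fin n → ℕ) (i : ℤ) :
    dCount n m i = dCount n m ((∑ x, (m x : ℤ)) - i) := by
  rw [dCount_eq_card, dCount_eq_card]
  refine Finset.card_nbij' (fun J k => m k - J k) (fun J k => m k - J k) ?_ ?_ ?_ ?_
  · intro J hJ
    rw [Finset.mem_coe, mem_dFinset] at hJ ⊢
    refine ⟨fun k => Nat.sub_le _ _, ?_⟩
    have : ∀ k, ((m k - J k : ℕ) : ℤ) = (m k : ℤ) - (J k : ℤ) := fun k =>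
      Nat.cast_sub (hJ.1 k)
    rw [Finset.sum_congr rfl fun k _ => this k, Finset.sum_sub_distrib, hJ.2]
  · intro J hJ
    rw [Finset.mem_coe, mem_dFinset] at hJ ⊢
    refine ⟨fun k => Nat.sub_le _ _, ?_⟩
    have : ∀ k, ((m k - J k : ℕ) : ℤ) = (m k : ℤ) - (J k : ℤ) := fun k =>
      Nat.cast_sub (hJ.1 k)
    rw [Finset.sum_congr rfl fun k _ => this k, Finset.sum_sub_distrib, hJ.2]
    ring
  · intro J hJ
    rw [Finset.mem_coe, mem_dFinset] at hJ
    funext k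
    exact Nat.sub_sub_self (hJ.1 k)
  · intro J hJ
    rw [Finset.mem_coe, mem_dFinset] at hJ
    funext k
    exact Nat.sub_sub_self (hJ.1 k)

/-- Recursion: split according to the first coordinate. -/
lemma dCount_rec (n : ℕ) (m : Fin (n + 1) → ℕ) (j : ℤ) :
    dCount (n + 1) m j
      = ∑ k ∈ Finset.range (m 0 + 1), dCount n (Fin.tail m) (j - k) := by
  classical
  rw [dCount_eq_card]
  rw [Finset.card_eq_sum_card_fiberwise (f := fun J => J 0)
    (t := Finset.range (m 0 + 1)) (fun J hJ => by
      rw [Finset.mem_coe, mem_dFinset] at hJ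
      exact Finset.mem_range.2 (Nat.lt_succ_of_le (hJ.1 0)))]
  refine Finset.sum_congr rfl fun k hk => ?_
  rw [dCount_eq_card]
  refine Finset.card_nbij' (fun J => Fin.tail J) (fun J => Fin.cons k J) ?_ ?_ ?_ ?_
  · intro J hJ
    simp only [Finset.mem_coe, Finset.mem_filter, mem_dFinset] at hJ
    obtain ⟨⟨h1, h2⟩, h0⟩ := hJ
    rw [Finset.mem_coe, mem_dFinset]
    refine ⟨fun i => h1 i.succ, ?_⟩
    rw [Fin.sum_univ_succ] at h2
    show (∑ i : Fin n, (J i.succ : ℤ)) = j - k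
    rw [h0] at h2
    omega
  · intro J hJ
    rw [Finset.mem_coe, mem_dFinset] at hJ
    simp only [Finset.mem_coe, Finset.mem_filter, mem_dFinset, Fin.cons_zero]
    refine ⟨⟨fun i => ?_, ?_⟩, trivial⟩
    · cases i using Fin.cases with
      | zero =>
          have := Finset.mem_range.1 hk
          simpa using Nat.lt_succ_iff.mp this
      | succ i => simpa [Fin.tail] using hJ.1 i
    · rw [Fin.sum_univ_succ]
      simp only [Fin.cons_zero, Fin.cons_succ]
      rw [hJ.2]; ring
  · intro J hJ
    simp only [Finset.mem_coe, Finset.mem_filter] at hJ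
    rw [← hJ.2]
    exact Fin.cons_self_tail J
  · intro J hJ
    funext i
    simp [Fin.tail_cons]

/-- Telescoping over `Finset.Icc` in `ℤ`, natural-number version. -/
lemma telescope_nat (f : ℤ → ℤ) (a : ℤ) (K : ℕ) :
    ∑ i ∈ Finset.Icc a (a - 1 + (K : ℤ)), (f i - f (i - 1))
      = f (a - 1 + (K : ℤ)) - f (a - 1) := by
  induction K with
  | zero =>
      rw [Finset.Icc_eq_empty (by omega)]
      simp
  | succ K ih =>
      have h : Finset.Icc a (a - 1 + ((K : ℤ) + 1))
          = insert (a - 1 + ((K : ℤ) + 1)) (Finset.Icc a (a - 1 + (K : ℤ))) := by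
        ext x
        simp only [Finset.mem_Icc, Finset.mem_insert]
        omega
      push_cast
      rw [h, Finset.sum_insert (by simp), ih]
      have : a - 1 + ((K : ℤ) + 1) - 1 = a - 1 + (K : ℤ) := by ring
      rw [this]
      ring

/-- Telescoping over `Finset.Icc` in `ℤ`. -/
lemma telescope (f : ℤ → ℤ) (a b : ℤ) (hb : a - 1 ≤ b) :
    ∑ i ∈ Finset.Icc a b, (f i - f (i - 1)) = f b - f (a - 1) := by
  obtain ⟨K, hK⟩ : ∃ K : ℕ, b = a - 1 + (K : ℤ) :=
    ⟨(b - (a - 1)).toNat, by omega⟩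
  subst hK
  exact telescope_nat f a K

/-- Shift: difference of two shifted range sums. -/
lemma shift_diff (f : ℤ → ℤ) (K : ℕ) (j : ℤ) :
    (∑ k ∈ Finset.range K, f (j - k)) - (∑ k ∈ Finset.range K, f (j - 1 - k))
      = f j - f (j - K) := by
  have h1 := Finset.sum_range_succ (fun k => f (j - k)) K
  have h2 := Finset.sum_range_succ' (fun k => f (j - k)) K
  have h3 : ∀ k : ℕ, f (j - (k + 1 : ℕ)) = f (j - 1 - k) := by
    intro k; congr 1; push_cast; ring
  simp only [h3, Nat.cast_zero, sub_zero] at h2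
  omega

/-- For a sorted tuple `m = (m_1,…,m_n)` with `n ≥ 3`, `r` the largest integer with
`|m| − 2r ≥ 0` and `r^1` the largest integer with `|m^1| − 2r^1 ≥ 0` (`m^1 = (m_2,…,m_n)`):
for every integer `j` with `r^1 < j ≤ r`,
`w(m,j) = w(m^1, j−m_1) + ⋯ + w(m^1, |m^1| − j)`. -/
theorem w_recursion_large (n : ℕ) (hn : 2 ≤ n) (m : Fin (n + 1) → ℕ) (hmono : Monotone m)
    (r : ℤ) (hr : 0 ≤ (∑ i, (m i : ℤ)) - 2 * r)
    (hrmax : ∀ s : ℤ, 0 ≤ (∑ i, (m i : ℤ)) - 2 * s → s ≤ r)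
    (r1 : ℤ) (hr1 : 0 ≤ (∑ i, (Fin.tail m i : ℤ)) - 2 * r1)
    (hr1max : ∀ s : ℤ, 0 ≤ (∑ i, (Fin.tail m i : ℤ)) - 2 * s → s ≤ r1)
    (j : ℤ) (hj1 : r1 < j) (hj2 : j ≤ r) :
    w (n + 1) m j
      = ∑ i ∈ Finset.Icc (j - m 0) ((∑ x, (Fin.tail m x : ℤ)) - j), w n (Fin.tail m) i := by
  set M1 : ℤ := ∑ x, (Fin.tail m x : ℤ) with hM1
  have hsplit : (∑ i, (m i : ℤ)) = (m 0 : ℤ) + M1 := by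
    rw [hM1, Fin.sum_univ_succ]
    rfl
  have h2j : 2 * j ≤ (m 0 : ℤ) + M1 := by
    rw [← hsplit]; omega
  -- RHS telescopes
  have hRHS : ∑ i ∈ Finset.Icc (j - m 0) (M1 - j), w n (Fin.tail m) i
      = (dCount n (Fin.tail m) (M1 - j) : ℤ)
        - (dCount n (Fin.tail m) (j - m 0 - 1) : ℤ) := by
    have := telescope (fun i => (dCount n (Fin.tail m) i : ℤ)) (j - m 0) (M1 - j)
      (by omega)
    simpa [w] using this
  rw [hRHS]
  -- LHS via the recursion and the shift
  have hrec1 : (dCount (n + 1) m j : ℤ)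
      = ∑ k ∈ Finset.range (m 0 + 1), (dCount n (Fin.tail m) (j - k) : ℤ) := by
    rw [dCount_rec]; push_cast; rfl
  have hrec2 : (dCount (n + 1) m (j - 1) : ℤ)
      = ∑ k ∈ Finset.range (m 0 + 1), (dCount n (Fin.tail m) (j - 1 - k) : ℤ) := by
    rw [dCount_rec]; push_cast; rfl
  have hshift := shift_diff (fun i => (dCount n (Fin.tail m) i : ℤ)) (m 0 + 1) j
  have hsym := dCount_symm n (Fin.tail m) j
  have hcast : j - ((m 0 + 1 : ℕ) : ℤ) = j - m 0 - 1 := by push_cast; ring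
  rw [w, hrec1, hrec2, hshift, hcast, hsym, ← hM1]
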